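/- For n ≥ 1, the orbit 𝒟(ℝ) of the diagonal tensor D under the action of G(ℝ) = GL(n,ℝ)×GL(n,ℝ)×GL(n,ℝ) is exactly the set of all n×n×n real tensors that have real tensor rank n and multilinear rank (n,n,n). -/

import Mathlib

set_option maxHeartbeats 1000000


open scoped BigOperators
open Matrix

/-- An `n×n×n` tensor with entries in `K`. -/
abbrev Tensor (n : ℕ) (K : Type*) := Fin n × Fin n × Fin n → K

namespace Tensor

variable {n : ℕ} {K : Type*}

section CommRing
variable [CommRing K]

/-- The right action of a triple of `n×n` matrices on an `n×n×n` tensor: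
`(P(g₁,g₂,g₃))_{ijk} = Σ_{a,b,c} P_{abc} g₁(a,i) g₂(b,j) g₃(c,k)`. -/
def act (P : Tensor n K) (g₁ g₂ g₃ : Matrix (Fin n) (Fin n) K) : Tensor n K :=
  fun x => ∑ a, ∑ b, ∑ c, P (a, b, c) * g₁ a x.1 * g₂ b x.2.1 * g₃ c x.2.2

/-- The diagonal tensor `D`, with `D_{iii} = 1` and all other entries `0`. -/
def DT (n : ℕ) (K : Type*) [CommRing K] : Tensor n K :=
  fun x => if x.1 = x.2.1 ∧ x.2.1 = x.2.2 then 1 else 0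

/-- The orbit of the diagonal tensor `D` under `GL(n,K)×GL(n,K)×GL(n,K)`. -/
def orbitD (n : ℕ) (K : Type*) [CommRing K] : Set (Tensor n K) :=
  {P | ∃ g₁ g₂ g₃ : Matrix (Fin n) (Fin n) K,
    IsUnit g₁.det ∧ IsUnit g₂.det ∧ IsUnit g₃.det ∧ P = (DT n K).act g₁ g₂ g₃}

/-- `P` admits a decomposition as a sum of `r` rank-one tensors. -/
def HasRankLE (P : Tensor n K) (r : ℕ) : Prop :=
  ∃ u v w : Fin r → Fin n → K, P = fun x => ∑ l, u l x.1 * v l x.2.1 * w l x.2.2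

/-- The tensor rank of `P`: the smallest `r` such that `P` is a sum of `r` rank-one tensors. -/
noncomputable def rank (P : Tensor n K) : ℕ := sInf {r | P.HasRankLE r}

/-- The three flattenings of `P` to an `n²×n` matrix; the columns of `flatten i P` are
indexed by the `i`-th index of `P`. -/
def flatten (i : Fin 3) (P : Tensor n K) : Matrix (Fin n × Fin n) (Fin n) K :=
  ![Matrix.of fun p a => P (a, p.1, p.2),
    Matrix.of fun p b => P (p.1, b, p.2),
    Matrix.of fun p c => P (p.1, p.2, c)] i

/-- Contraction `P *_i v` of the `i`-th index of `P` against a vector `v`. -/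
def contr (i : Fin 3) (P : Tensor n K) (v : Fin n → K) : Matrix (Fin n) (Fin n) K :=
  ![Matrix.of fun j k => ∑ a, P (a, j, k) * v a,
    Matrix.of fun j k => ∑ b, P (j, b, k) * v b,
    Matrix.of fun j k => ∑ c, P (j, k, c) * v c] i

/-- The `j`-th `i`-slice of `P`, i.e. `P *_i e_j`. -/
def slice (i : Fin 3) (P : Tensor n K) (j : Fin n) : Matrix (Fin n) (Fin n) K :=
  contr i P (Pi.single j 1)

/-- The commutation relations in index `i`:
`(P*_i e_j)·adj(P*_i v)·(P*_i e_k) = (P*_i e_k)·adj(P*_i v)·(P*_i e_j)`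
for all `v` and all `j < k`. -/
def CommRel (i : Fin 3) (P : Tensor n K) : Prop :=
  ∀ (v : Fin n → K) (j k : Fin n), j < k →
    slice i P j * (contr i P v).adjugate * slice i P k
      = slice i P k * (contr i P v).adjugate * slice i P j

/-- The matrix `P *_i x`, where `x` is a vector of indeterminates. -/
noncomputable def contrX (i : Fin 3) (P : Tensor n K) :
    Matrix (Fin n) (Fin n) (MvPolynomial (Fin n) K) :=
  ![Matrix.of fun j k => ∑ a, MvPolynomial.C (P (a, j, k)) * MvPolynomial.X a,
    Matrix.of fun j k => ∑ b, MvPolynomial.C (P (j, b, k)) * MvPolynomial.X b,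
    Matrix.of fun j k => ∑ c, MvPolynomial.C (P (j, k, c)) * MvPolynomial.X c] i

/-- `h_i(P;x) = det (P *_i x)`, a polynomial in the indeterminates `x`. -/
noncomputable def hpoly (i : Fin 3) (P : Tensor n K) : MvPolynomial (Fin n) K :=
  (contrX i P).det

/-- The Hessian matrix of a polynomial in the indeterminates `x`. -/
noncomputable def hess (p : MvPolynomial (Fin n) K) :
    Matrix (Fin n) (Fin n) (MvPolynomial (Fin n) K) :=
  Matrix.of fun a b => MvPolynomial.pderiv a (MvPolynomial.pderiv b p)

/-- `f_i(P;x) = (-1)^(n-1) det (H_x (h_i(P;x)))`. -/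
noncomputable def fpoly (i : Fin 3) (P : Tensor n K) : MvPolynomial (Fin n) K :=
  (-1) ^ (n - 1) * (hess (hpoly i P)).det

/-- Substitution `x ↦ g x` in a polynomial in the indeterminates `x`. -/
noncomputable def substX (g : Matrix (Fin n) (Fin n) K) (p : MvPolynomial (Fin n) K) :
    MvPolynomial (Fin n) K :=
  MvPolynomial.aeval (fun j => ∑ k, MvPolynomial.C (g j k) * MvPolynomial.X k) p

end CommRing

/-- A complex tensor is real when all of its entries are real. -/
def IsReal (P : Tensor n ℂ) : Prop := ∀ x, (P x).im = 0

/-- The inclusion of real tensors into complex tensors. -/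
noncomputable def toC (n : ℕ) : Tensor n ℝ → Tensor n ℂ := fun P x => (P x : ℂ)

/-- The orbit `𝒟(ℝ)` of `D` under `GL(n,ℝ)³`, viewed inside the complex tensors. -/
def orbitDR (n : ℕ) : Set (Tensor n ℂ) := toC n '' orbitD n ℝ

/-- The border rank of `P`: the smallest `r` such that `P` is a limit of tensors of
rank at most `r`. -/
noncomputable def borderRank (P : Tensor n ℂ) : ℕ :=
  sInf {r | P ∈ closure {Q : Tensor n ℂ | Q.HasRankLE r}}

/-- The first nonzero entry of every row of `g` equals `1`. -/
def FirstNonzeroOne (g : Matrix (Fin n) (Fin n) ℂ) : Prop :=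
  ∀ r c : Fin n, g r c ≠ 0 → (∀ c' : Fin n, c' < c → g r c' = 0) → g r c = 1

/-- The first `2k` rows of `g` are non-real and not purely imaginary, and occur in complex
conjugate pairs (row `2j+1` conjugate to row `2j`); the remaining rows are real. -/
def ConjPairStructure (k : ℕ) (g : Matrix (Fin n) (Fin n) ℂ) : Prop :=
  (∀ m m' : Fin n, (m : ℕ) < 2 * k → Even (m : ℕ) → (m' : ℕ) = (m : ℕ) + 1 →
      ∀ c, g m' c = (starRingEnd ℂ) (g m c)) ∧
  (∀ m : Fin n, (m : ℕ) < 2 * k → (∃ c, (g m c).im ≠ 0) ∧ (∃ c, (g m c).re ≠ 0)) ∧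
  (∀ m : Fin n, 2 * k ≤ (m : ℕ) → ∀ c, (g m c).im = 0)

/-- A normalized decomposition `P = D(g₁,g₂,g₃)` exhibiting signature `(n-2k, k)`:
the first nonzero entry of every row of `g₁,g₂` is `1`, and each `gᵢ` has its first `2k`
rows non-real occurring in conjugate pairs, with the remaining rows real. -/
def SigDecomp (P : Tensor n ℂ) (k : ℕ) (g₁ g₂ g₃ : Matrix (Fin n) (Fin n) ℂ) : Prop :=
  2 * k ≤ n ∧ IsUnit g₁.det ∧ IsUnit g₂.det ∧ IsUnit g₃.det ∧
  P = (DT n ℂ).act g₁ g₂ g₃ ∧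
  FirstNonzeroOne g₁ ∧ FirstNonzeroOne g₂ ∧
  ConjPairStructure k g₁ ∧ ConjPairStructure k g₂ ∧ ConjPairStructure k g₃

/-- `P` has signature `(n-2k, k)`: its unique rank-`n` decomposition has exactly `2k`
non-real rank-one summands, occurring in conjugate pairs. -/
def HasSignature (P : Tensor n ℂ) (k : ℕ) : Prop :=
  ∃ g₁ g₂ g₃ : Matrix (Fin n) (Fin n) ℂ, SigDecomp P k g₁ g₂ g₃

/-- Cayley's hyperdeterminant of a `2×2×2` tensor. -/
noncomputable def Delta (P : Tensor 2 ℂ) : ℂ :=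
  (P (0,0,0) ^ 2 * P (1,1,1) ^ 2 + P (0,0,1) ^ 2 * P (1,1,0) ^ 2
    + P (0,1,0) ^ 2 * P (1,0,1) ^ 2 + P (0,1,1) ^ 2 * P (1,0,0) ^ 2)
  - 2 * (P (0,0,0) * P (0,0,1) * P (1,1,0) * P (1,1,1)
    + P (0,0,0) * P (0,1,0) * P (1,0,1) * P (1,1,1)
    + P (0,0,0) * P (0,1,1) * P (1,0,0) * P (1,1,1)
    + P (0,0,1) * P (0,1,0) * P (1,0,1) * P (1,1,0)
    + P (0,0,1) * P (0,1,1) * P (1,1,0) * P (1,0,0)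
    + P (0,1,0) * P (0,1,1) * P (1,0,1) * P (1,0,0))
  + 4 * (P (0,0,0) * P (0,1,1) * P (1,0,1) * P (1,1,0)
    + P (0,0,1) * P (0,1,0) * P (1,0,0) * P (1,1,1))

/-- The Levi-Civita symbol on three indices, `ε₁₂₃ = 1`. -/
noncomputable def eps (i j k : Fin 3) : ℂ :=
  if (i, j, k) = ((0 : Fin 3), (1 : Fin 3), (2 : Fin 3)) ∨ (i, j, k) = (1, 2, 0)
      ∨ (i, j, k) = (2, 0, 1) then 1
  else if (i, j, k) = ((2 : Fin 3), (1 : Fin 3), (0 : Fin 3)) ∨ (i, j, k) = (1, 0, 2)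
      ∨ (i, j, k) = (0, 2, 1) then -1
  else 0

/-- The degree-6 invariant `τ₃` of `3×3×3` tensors, given by a six-fold Levi-Civita
contraction. -/
noncomputable def tau3 (P : Tensor 3 ℂ) : ℂ :=
  ∑ i : Fin 3 × Fin 3 × Fin 3, ∑ j : Fin 3 × Fin 3 × Fin 3, ∑ k : Fin 3 × Fin 3 × Fin 3,
    ∑ l : Fin 3 × Fin 3 × Fin 3, ∑ m : Fin 3 × Fin 3 × Fin 3, ∑ o : Fin 3 × Fin 3 × Fin 3,
      P i * P j * P k * P l * P m * P o *
        eps i.1 j.1 k.1 * eps j.2.1 k.2.1 l.2.1 * eps k.2.2 l.2.2 m.2.2 *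
        eps l.1 m.1 o.1 * eps m.2.1 o.2.1 i.2.1 * eps o.2.2 i.2.2 j.2.2

end Tensor

section Aux

open Tensor

variable {n : ℕ}

lemma aux_isUnit_det_of_rank {A : Matrix (Fin n) (Fin n) ℝ} (h : n ≤ A.rank) :
    IsUnit A.det := by
  have hle : A.rank ≤ n := by simpa using A.rank_le_card_width
  have htop : LinearMap.range A.mulVecLin = ⊤ := by
    apply Submodule.eq_top_of_finrank_eq
    have hdef : Module.finrank ℝ (LinearMap.range A.mulVecLin) = A.rank := rfl
    rw [hdef, le_antisymm hle h]
    simp [Module.finrank_pi]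
  have hsurj : Function.Surjective A.mulVec := by
    have := LinearMap.range_eq_top.mp htop
    intro y
    obtain ⟨x, hx⟩ := this y
    exact ⟨x, by rw [← Matrix.mulVecLin_apply]; exact hx⟩
  exact (Matrix.isUnit_iff_isUnit_det A).mp (Matrix.mulVec_surjective_iff_isUnit.mp hsurj)

lemma aux_DT_act_eq (g₁ g₂ g₃ : Matrix (Fin n) (Fin n) ℝ) :
    (Tensor.DT n ℝ).act g₁ g₂ g₃ = fun x => ∑ a, g₁ a x.1 * g₂ a x.2.1 * g₃ a x.2.2 := by
  funext x
  simp [Tensor.act, Tensor.DT, ite_and, ite_mul, Finset.sum_ite_eq]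

lemma aux_flatten0_factor {r : ℕ} (u v w : Fin r → Fin n → ℝ) :
    Tensor.flatten 0 (fun x => ∑ l, u l x.1 * v l x.2.1 * w l x.2.2 : Tensor n ℝ)
      = (Matrix.of fun (p : Fin n × Fin n) l => v l p.1 * w l p.2)
          * (Matrix.of fun l a => u l a) := by
  ext p a
  show (∑ l, u l a * v l p.1 * w l p.2) = _
  rw [Matrix.mul_apply]
  exact Finset.sum_congr rfl fun l _ => by simp only [Matrix.of_apply]; try ring

lemma aux_flatten1_factor {r : ℕ} (u v w : Fin r → Fin n → ℝ) :
    Tensor.flatten 1 (fun x => ∑ l, u l x.1 * v l x.2.1 * w l x.2.2 : Tensor n ℝ)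
      = (Matrix.of fun (p : Fin n × Fin n) l => u l p.1 * w l p.2)
          * (Matrix.of fun l b => v l b) := by
  ext p b
  show (∑ l, u l p.1 * v l b * w l p.2) = _
  rw [Matrix.mul_apply]
  exact Finset.sum_congr rfl fun l _ => by simp only [Matrix.of_apply]; try ring

lemma aux_flatten2_factor {r : ℕ} (u v w : Fin r → Fin n → ℝ) :
    Tensor.flatten 2 (fun x => ∑ l, u l x.1 * v l x.2.1 * w l x.2.2 : Tensor n ℝ)
      = (Matrix.of fun (p : Fin n × Fin n) l => u l p.1 * v l p.2)
          * (Matrix.of fun l c => w l c) := by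
  ext p c
  show (∑ l, u l p.1 * v l p.2 * w l c) = _
  rw [Matrix.mul_apply]
  exact Finset.sum_congr rfl fun l _ => by simp only [Matrix.of_apply]; try ring

lemma aux_kr_left_inv (A B : Matrix (Fin n) (Fin n) ℝ) (hA : IsUnit A.det) (hB : IsUnit B.det) :
    (Matrix.of fun (x : Fin n) (p : Fin n × Fin n) => A⁻¹ p.1 x * B⁻¹ p.2 x) *
      (Matrix.of fun (p : Fin n × Fin n) l => A l p.1 * B l p.2) = 1 := by
  ext x y
  rw [Matrix.mul_apply]
  simp only [Matrix.of_apply]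
  rw [Fintype.sum_prod_type]
  have key : ∀ p1 p2 : Fin n, (A⁻¹ p1 x * B⁻¹ p2 x) * (A y p1 * B y p2)
      = (A y p1 * A⁻¹ p1 x) * (B y p2 * B⁻¹ p2 x) := fun _ _ => by ring
  simp_rw [key]
  rw [← Finset.sum_mul_sum]
  have h1 : ∑ p1, A y p1 * A⁻¹ p1 x = (1 : Matrix (Fin n) (Fin n) ℝ) y x := by
    rw [← Matrix.mul_apply, Matrix.mul_nonsing_inv _ hA]
  have h2 : ∑ p2, B y p2 * B⁻¹ p2 x = (1 : Matrix (Fin n) (Fin n) ℝ) y x := by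
    rw [← Matrix.mul_apply, Matrix.mul_nonsing_inv _ hB]
  rw [h1, h2, Matrix.one_apply, Matrix.one_apply]
  by_cases h : y = x
  · simp [h]
  · rw [if_neg h, if_neg fun hh => h hh.symm, zero_mul]

lemma aux_flatten_rank_le {P : Tensor n ℝ} {r : ℕ} (h : Tensor.HasRankLE P r) (i : Fin 3) :
    (Tensor.flatten i P).rank ≤ r := by
  obtain ⟨u, v, w, hP⟩ := h
  subst hP
  have hcard : ∀ (N : Matrix (Fin r) (Fin n) ℝ), N.rank ≤ r := fun N => by
    simpa using N.rank_le_card_height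
  fin_cases i
  · show (Tensor.flatten 0 (fun x => ∑ l, u l x.1 * v l x.2.1 * w l x.2.2 : Tensor n ℝ)).rank ≤ r
    rw [aux_flatten0_factor]
    exact le_trans (Matrix.rank_mul_le_right _ _) (hcard _)
  · show (Tensor.flatten 1 (fun x => ∑ l, u l x.1 * v l x.2.1 * w l x.2.2 : Tensor n ℝ)).rank ≤ r
    rw [aux_flatten1_factor]
    exact le_trans (Matrix.rank_mul_le_right _ _) (hcard _)
  · show (Tensor.flatten 2 (fun x => ∑ l, u l x.1 * v l x.2.1 * w l x.2.2 : Tensor n ℝ)).rank ≤ r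
    rw [aux_flatten2_factor]
    exact le_trans (Matrix.rank_mul_le_right _ _) (hcard _)

lemma aux_hasRankLE_sq (P : Tensor n ℝ) : Tensor.HasRankLE P (n * n) := by
  refine ⟨fun l a => P (a, (finProdFinEquiv.symm l).1, (finProdFinEquiv.symm l).2),
         fun l j => if (finProdFinEquiv.symm l).1 = j then 1 else 0,
         fun l k => if (finProdFinEquiv.symm l).2 = k then 1 else 0, ?_⟩
  funext x
  rw [← Equiv.sum_comp (finProdFinEquiv : Fin n × Fin n ≃ Fin (n * n))]
  simp only [Equiv.symm_apply_apply]
  rw [Fintype.sum_prod_type]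
  simp [ite_mul, mul_ite, Finset.sum_ite_eq']

end Aux

/-- `𝒟(ℝ)` is exactly the set of `n×n×n` real tensors of real tensor
rank `n` and multilinear rank `(n,n,n)`. -/
theorem statement_1 (n : ℕ) (hn : 1 ≤ n) :
    Tensor.orbitD n ℝ =
      {P : Tensor n ℝ | Tensor.rank P = n ∧ ∀ i : Fin 3, (Tensor.flatten i P).rank = n} := by
  ext P
  simp only [Set.mem_setOf_eq]
  constructor
  · rintro ⟨g₁, g₂, g₃, h1, h2, h3, rfl⟩
    have hQ : (Tensor.DT n ℝ).act g₁ g₂ g₃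
        = fun x => ∑ a, g₁ a x.1 * g₂ a x.2.1 * g₃ a x.2.2 := aux_DT_act_eq g₁ g₂ g₃
    have hrle : Tensor.HasRankLE ((Tensor.DT n ℝ).act g₁ g₂ g₃) n :=
      ⟨fun l => g₁ l, fun l => g₂ l, fun l => g₃ l, hQ⟩
    have hrank1 : g₁.rank = n := by
      simpa using Matrix.rank_of_isUnit g₁ ((Matrix.isUnit_iff_isUnit_det g₁).mpr h1)
    have hrank2 : g₂.rank = n := by
      simpa using Matrix.rank_of_isUnit g₂ ((Matrix.isUnit_iff_isUnit_det g₂).mpr h2)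
    have hrank3 : g₃.rank = n := by
      simpa using Matrix.rank_of_isUnit g₃ ((Matrix.isUnit_iff_isUnit_det g₃).mpr h3)
    have hub : ∀ i : Fin 3, (Tensor.flatten i ((Tensor.DT n ℝ).act g₁ g₂ g₃)).rank ≤ n :=
      fun i => by
        simpa using (Tensor.flatten i ((Tensor.DT n ℝ).act g₁ g₂ g₃)).rank_le_card_width
    have hfac0 := aux_flatten0_factor (fun l => g₁ l) (fun l => g₂ l) (fun l => g₃ l)
    have hfac1 := aux_flatten1_factor (fun l => g₁ l) (fun l => g₂ l) (fun l => g₃ l)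
    have hfac2 := aux_flatten2_factor (fun l => g₁ l) (fun l => g₂ l) (fun l => g₃ l)
    rw [← hQ] at hfac0 hfac1 hfac2
    have hL0 : (Matrix.of fun (x : Fin n) (p : Fin n × Fin n) => g₂⁻¹ p.1 x * g₃⁻¹ p.2 x)
        * Tensor.flatten 0 ((Tensor.DT n ℝ).act g₁ g₂ g₃) = g₁ := by
      rw [hfac0, ← Matrix.mul_assoc, aux_kr_left_inv g₂ g₃ h2 h3, Matrix.one_mul]; rfl
    have hL1 : (Matrix.of fun (x : Fin n) (p : Fin n × Fin n) => g₁⁻¹ p.1 x * g₃⁻¹ p.2 x)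
        * Tensor.flatten 1 ((Tensor.DT n ℝ).act g₁ g₂ g₃) = g₂ := by
      rw [hfac1, ← Matrix.mul_assoc, aux_kr_left_inv g₁ g₃ h1 h3, Matrix.one_mul]; rfl
    have hL2 : (Matrix.of fun (x : Fin n) (p : Fin n × Fin n) => g₁⁻¹ p.1 x * g₂⁻¹ p.2 x)
        * Tensor.flatten 2 ((Tensor.DT n ℝ).act g₁ g₂ g₃) = g₃ := by
      rw [hfac2, ← Matrix.mul_assoc, aux_kr_left_inv g₁ g₂ h1 h2, Matrix.one_mul]; rfl
    have hlb0 : n ≤ (Tensor.flatten 0 ((Tensor.DT n ℝ).act g₁ g₂ g₃)).rank := by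
      calc n = g₁.rank := hrank1.symm
        _ = ((Matrix.of fun (x : Fin n) (p : Fin n × Fin n) => _) *
              Tensor.flatten 0 ((Tensor.DT n ℝ).act g₁ g₂ g₃)).rank :=
          congrArg Matrix.rank hL0.symm
        _ ≤ _ := Matrix.rank_mul_le_right _ _
    have hlb1 : n ≤ (Tensor.flatten 1 ((Tensor.DT n ℝ).act g₁ g₂ g₃)).rank := by
      calc n = g₂.rank := hrank2.symm
        _ = ((Matrix.of fun (x : Fin n) (p : Fin n × Fin n) => _) *
              Tensor.flatten 1 ((Tensor.DT n ℝ).act g₁ g₂ g₃)).rank :=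
          congrArg Matrix.rank hL1.symm
        _ ≤ _ := Matrix.rank_mul_le_right _ _
    have hlb2 : n ≤ (Tensor.flatten 2 ((Tensor.DT n ℝ).act g₁ g₂ g₃)).rank := by
      calc n = g₃.rank := hrank3.symm
        _ = ((Matrix.of fun (x : Fin n) (p : Fin n × Fin n) => _) *
              Tensor.flatten 2 ((Tensor.DT n ℝ).act g₁ g₂ g₃)).rank :=
          congrArg Matrix.rank hL2.symm
        _ ≤ _ := Matrix.rank_mul_le_right _ _
    have hfl : ∀ i : Fin 3, (Tensor.flatten i ((Tensor.DT n ℝ).act g₁ g₂ g₃)).rank = n := by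
      intro i
      fin_cases i
      · exact le_antisymm (hub 0) hlb0
      · exact le_antisymm (hub 1) hlb1
      · exact le_antisymm (hub 2) hlb2
    refine ⟨?_, hfl⟩
    have hne : {r | Tensor.HasRankLE ((Tensor.DT n ℝ).act g₁ g₂ g₃) r}.Nonempty := ⟨n, hrle⟩
    have hmem : Tensor.HasRankLE ((Tensor.DT n ℝ).act g₁ g₂ g₃)
        (Tensor.rank ((Tensor.DT n ℝ).act g₁ g₂ g₃)) := Nat.sInf_mem hne
    refine le_antisymm (Nat.sInf_le hrle) ?_
    calc n = (Tensor.flatten 0 ((Tensor.DT n ℝ).act g₁ g₂ g₃)).rank := (hfl 0).symm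
      _ ≤ _ := aux_flatten_rank_le hmem 0
  · rintro ⟨hrank, hfl⟩
    have hne : {r | Tensor.HasRankLE P r}.Nonempty := ⟨n * n, aux_hasRankLE_sq P⟩
    have hmem : Tensor.HasRankLE P n := by
      have h' : P.HasRankLE P.rank := Nat.sInf_mem hne
      rwa [hrank] at h'
    obtain ⟨u, v, w, hP⟩ := hmem
    subst hP
    refine ⟨Matrix.of u, Matrix.of v, Matrix.of w, ?_, ?_, ?_, ?_⟩
    · apply aux_isUnit_det_of_rank
      calc n = _ := (hfl 0).symm
        _ ≤ (Matrix.of u).rank := by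
            rw [aux_flatten0_factor]; exact Matrix.rank_mul_le_right _ _
    · apply aux_isUnit_det_of_rank
      calc n = _ := (hfl 1).symm
        _ ≤ (Matrix.of v).rank := by
            rw [aux_flatten1_factor]; exact Matrix.rank_mul_le_right _ _
    · apply aux_isUnit_det_of_rank
      calc n = _ := (hfl 2).symm
        _ ≤ (Matrix.of w).rank := by
            rw [aux_flatten2_factor]; exact Matrix.rank_mul_le_right _ _
    · rw [aux_DT_act_eq]; rfl
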